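/- Let Q : [0,∞) → [0,∞) be nondecreasing and concave with Q(0) = 0. For 0 < u < v define Q(u,v) = (Q(u) + Q(v) − Q(v−u))/2. Then Q(u)Q(v) − Q(u,v)² ≥ (1/2) Q(v−u) Q(u). -/

import Mathlib

open Set

theorem stationary_coercivity (Q : ℝ → ℝ)
    (hmono : MonotoneOn Q (Ici (0 : ℝ)))
    (hconc : ConcaveOn ℝ (Ici (0 : ℝ)) Q)
    (hQ0 : Q 0 = 0)
    (hnonneg : ∀ x ∈ Ici (0 : ℝ), 0 ≤ Q x) :
    ∀ u v : ℝ, 0 < u → u < v →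
      (1 / 2) * Q (v - u) * Q u ≤
        Q u * Q v - ((Q u + Q v - Q (v - u)) / 2) ^ 2 := by
  intro u v hu huv
  have hv : 0 < v := hu.trans huv
  have hvu : 0 < v - u := by linarith
  have h0m : (0:ℝ) ∈ Ici (0:ℝ) := mem_Ici.2 (le_refl 0)
  have hum : u ∈ Ici (0:ℝ) := le_of_lt hu
  have hvm : v ∈ Ici (0:ℝ) := le_of_lt hv
  have hvum : v - u ∈ Ici (0:ℝ) := le_of_lt hvu
  have ha : 0 ≤ Q u := hnonneg u hum
  have hc : 0 ≤ Q (v - u) := hnonneg _ hvum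
  have hab : Q u ≤ Q v := hmono hum hvm (le_of_lt huv)
  have hcb : Q (v - u) ≤ Q v := hmono hvum hvm (by linarith)
  -- subadditivity: Q v ≤ Q u + Q (v - u)
  have h1 : (1 - u/v) * Q 0 + (u/v) * Q v ≤ Q ((1 - u/v) • (0:ℝ) + (u/v) • v) :=
    hconc.2 h0m hvm (by
      have : u/v ≤ 1 := by rw [div_le_one hv]; linarith
      linarith) (by positivity) (by ring)
  have h2 : (u/v) * Q 0 + (1 - u/v) * Q v ≤ Q ((u/v) • (0:ℝ) + (1 - u/v) • v) := by
    apply hconc.2 h0m hvm (by positivity)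
    · have : u/v ≤ 1 := by
        rw [div_le_one hv]; linarith
      linarith
    · ring
  have e1 : (1 - u/v) • (0:ℝ) + (u/v) • v = u := by
    simp only [smul_eq_mul, mul_zero, zero_add]; exact div_mul_cancel₀ u hv.ne'
  have e2 : (u/v) • (0:ℝ) + (1 - u/v) • v = v - u := by
    simp only [smul_eq_mul, mul_zero, zero_add]; rw [sub_mul, one_mul, div_mul_cancel₀ u hv.ne']
  rw [e1, hQ0] at h1
  rw [e2, hQ0] at h2
  have hsub : Q v ≤ Q u + Q (v - u) := by
    have := add_le_add h1 h2
    have heq : (1 - u/v) * 0 + (u/v) * Q v + ((u/v) * 0 + (1 - u/v) * Q v) = Q v := by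
      ring
    linarith [this, heq ▸ this]
  nlinarith [sq_nonneg (Q v - Q (v - u)), mul_nonneg ha hc,
    mul_le_mul_of_nonneg_left hsub ha, mul_nonneg ha (sub_nonneg.2 hab)]
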